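/- Let N = 4m with m ≥ 1 an integer and let p be the completely randomized design with equal group sizes. For each w ∈ 𝒲 let G*(w) be the set of all substitutes of w, i.e., G*(w) = {w̃ : Σ_i w̃_i = N/2, |T(w̃) ∩ T(w)| = N/4}. Then for every assignment W ∈ 𝒲 and every choice of the potential outcomes, the contrast variance estimator computed with G = G* equals Neyman's variance estimator: V̂_sub(W) = V̂_Neyman(W). -/

import Mathlib

open Finset
open scoped Classical

variable {α : Type*} [DecidableEq α]

lemma card_powersetCard_filter_subset (s t : Finset α) (k : ℕ) (ht : t ⊆ s) (htk : t.card ≤ k) :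
    ((s.powersetCard k).filter fun A => t ⊆ A).card = (s.card - t.card).choose (k - t.card) := by
  have : ((s.powersetCard k).filter fun A => t ⊆ A).card
      = ((s \ t).powersetCard (k - t.card)).card := by
    apply Finset.card_nbij' (fun A => A \ t) (fun B => B ∪ t)
    · intro A hA
      rw [mem_coe, mem_filter, mem_powersetCard] at hA
      rw [mem_coe, mem_powersetCard]
      exact ⟨sdiff_subset_sdiff hA.1.1 Subset.rfl, by rw [card_sdiff_of_subset hA.2, hA.1.2]⟩
    · intro B hB
      rw [mem_coe, mem_powersetCard] at hB
      have hdisj : Disjoint B t := disjoint_of_subset_left hB.1 sdiff_disjoint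
      rw [mem_coe, mem_filter, mem_powersetCard]
      refine ⟨⟨union_subset (hB.1.trans sdiff_subset) ht, ?_⟩, subset_union_right⟩
      rw [card_union_of_disjoint hdisj, hB.2, Nat.sub_add_cancel htk]
    · intro A hA
      rw [mem_coe, mem_filter] at hA
      exact sdiff_union_of_subset hA.2
    · intro B hB
      rw [mem_coe, mem_powersetCard] at hB
      exact union_sdiff_cancel_right (disjoint_of_subset_left hB.1 sdiff_disjoint)
  rw [this, Finset.card_powersetCard, card_sdiff_of_subset ht]

lemma card_powersetCard_filter_mem (s : Finset α) (i : α) (k : ℕ) (hi : i ∈ s) (hk : 1 ≤ k) :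
    ((s.powersetCard k).filter fun A => i ∈ A).card = (s.card - 1).choose (k - 1) := by
  have := card_powersetCard_filter_subset s {i} k (singleton_subset_iff.mpr hi)
    (by simpa using hk)
  simpa using this

lemma card_powersetCard_filter_pair (s : Finset α) (i j : α) (k : ℕ) (hi : i ∈ s) (hj : j ∈ s)
    (hij : i ≠ j) :
    ((s.powersetCard k).filter fun A => i ∈ A ∧ j ∈ A).card
      = if 2 ≤ k then (s.card - 2).choose (k - 2) else 0 := by
  split_ifs with h2
  · have := card_powersetCard_filter_subset s {i, j} k
      (by rw [insert_subset_iff, singleton_subset_iff]; exact ⟨hi, hj⟩)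
      (by rw [card_pair hij]; exact h2)
    rw [card_pair hij] at this
    rw [← this]
    congr 1
    apply filter_congr
    intro A _
    simp [insert_subset_iff]
  · rw [Finset.card_eq_zero, Finset.filter_eq_empty_iff]
    intro A hA
    rw [mem_powersetCard] at hA
    rintro ⟨hiA, hjA⟩
    have : ({i, j} : Finset α) ⊆ A := by
      rw [insert_subset_iff, singleton_subset_iff]; exact ⟨hiA, hjA⟩
    have := (card_le_card this)
    rw [card_pair hij, hA.2] at this
    omega

lemma sum_eq_sum_ite (s A : Finset α) (hA : A ⊆ s) (f : α → ℝ) :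
    ∑ i ∈ A, f i = ∑ i ∈ s, if i ∈ A then f i else 0 := by
  rw [← Finset.sum_filter, Finset.filter_mem_eq_inter, inter_eq_right.mpr hA]

/-- Sum over all k-subsets of the subset-sum of f. -/
lemma sum_powersetCard_linear (s : Finset α) (k : ℕ) (hk : 1 ≤ k) (f : α → ℝ) :
    ∑ A ∈ s.powersetCard k, ∑ i ∈ A, f i
      = ((s.card - 1).choose (k - 1) : ℝ) * ∑ i ∈ s, f i := by
  calc ∑ A ∈ s.powersetCard k, ∑ i ∈ A, f i
      = ∑ A ∈ s.powersetCard k, ∑ i ∈ s, if i ∈ A then f i else 0 := by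
        refine sum_congr rfl fun A hA => ?_
        exact sum_eq_sum_ite s A (mem_powersetCard.mp hA).1 f
    _ = ∑ i ∈ s, ∑ A ∈ s.powersetCard k, if i ∈ A then f i else 0 := Finset.sum_comm
    _ = ∑ i ∈ s, ((s.card - 1).choose (k - 1) : ℝ) * f i := by
        refine sum_congr rfl fun i hi => ?_
        rw [← Finset.sum_filter, Finset.sum_const,
          card_powersetCard_filter_mem s i k hi hk, nsmul_eq_mul]
    _ = _ := by rw [← Finset.mul_sum]

/-- Sum over all k-subsets of the squared subset-sum of a centered f. -/
lemma sum_powersetCard_sq (s : Finset α) (k : ℕ) (hk : 1 ≤ k) (hkn : k ≤ s.card)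
    (z : α → ℝ) (h0 : ∑ i ∈ s, z i = 0) :
    ∑ A ∈ s.powersetCard k, (∑ i ∈ A, z i) ^ 2
      = ((s.card - 2).choose (k - 1) : ℝ) * ∑ i ∈ s, (z i) ^ 2 := by
  set c1 : ℕ := (s.card - 1).choose (k - 1) with hc1
  set c2 : ℕ := if 2 ≤ k then (s.card - 2).choose (k - 2) else 0 with hc2
  have key : ∑ A ∈ s.powersetCard k, (∑ i ∈ A, z i) ^ 2
      = ∑ i ∈ s, ∑ j ∈ s, (((s.powersetCard k).filter fun A => i ∈ A ∧ j ∈ A).card : ℝ)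
          * (z i * z j) := by
    calc ∑ A ∈ s.powersetCard k, (∑ i ∈ A, z i) ^ 2
        = ∑ A ∈ s.powersetCard k, ∑ i ∈ s, ∑ j ∈ s,
            if i ∈ A ∧ j ∈ A then z i * z j else 0 := by
          refine sum_congr rfl fun A hA => ?_
          have hAs := (mem_powersetCard.mp hA).1
          rw [sq, sum_eq_sum_ite s A hAs, Finset.sum_mul_sum]
          refine sum_congr rfl fun i _ => sum_congr rfl fun j _ => ?_
          by_cases h1 : i ∈ A <;> by_cases h2 : j ∈ A <;> simp [h1, h2]
      _ = ∑ i ∈ s, ∑ j ∈ s, ∑ A ∈ s.powersetCard k,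
            if i ∈ A ∧ j ∈ A then z i * z j else 0 := by
          rw [Finset.sum_comm]
          exact sum_congr rfl fun i _ => Finset.sum_comm
      _ = _ := by
          refine sum_congr rfl fun i _ => sum_congr rfl fun j _ => ?_
          rw [← Finset.sum_filter, Finset.sum_const, nsmul_eq_mul]
  rw [key]
  have inner : ∀ i ∈ s, ∑ j ∈ s,
      (((s.powersetCard k).filter fun A => i ∈ A ∧ j ∈ A).card : ℝ) * (z i * z j)
      = (c1 : ℝ) * (z i)^2 - (c2 : ℝ) * (z i)^2 := by
    intro i hi
    rw [← Finset.add_sum_erase _ _ hi]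
    have hii : (((s.powersetCard k).filter fun A => i ∈ A ∧ i ∈ A).card : ℝ) = (c1 : ℝ) := by
      norm_cast
      rw [hc1, ← card_powersetCard_filter_mem s i k hi hk]
      congr 1
      exact filter_congr fun A _ => by simp
    have hrest : ∀ j ∈ s.erase i,
        (((s.powersetCard k).filter fun A => i ∈ A ∧ j ∈ A).card : ℝ) * (z i * z j)
        = (c2 : ℝ) * (z i * z j) := by
      intro j hj
      have hjs := mem_of_mem_erase hj
      have hij : i ≠ j := fun h => (ne_of_mem_erase hj) h.symm
      rw [card_powersetCard_filter_pair s i j k hi hjs hij, hc2]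
    rw [sum_congr rfl hrest, ← Finset.mul_sum, ← Finset.mul_sum,
      Finset.sum_erase_eq_sub hi, h0]
    rw [hii]
    ring
  rw [sum_congr rfl inner, Finset.sum_sub_distrib, ← Finset.mul_sum, ← Finset.mul_sum]
  have harith : (c1 : ℝ) - (c2 : ℝ) = ((s.card - 2).choose (k - 1) : ℝ) := by
    rcases Nat.lt_or_ge k 2 with hk2 | hk2
    · have hk1 : k = 1 := by omega
      subst hk1
      simp [hc1, hc2]
    · obtain ⟨k', rfl⟩ : ∃ k', k = k' + 2 := ⟨k - 2, by omega⟩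
      obtain ⟨n', hn'⟩ : ∃ n', s.card = n' + 2 := ⟨s.card - 2, by omega⟩
      rw [hc1, hc2, if_pos hk2, hn']
      norm_num
      rw [Nat.choose_succ_succ]
      push_cast
      ring
  rw [← sub_mul, harith]

noncomputable section

/-- Observed outcome of unit `i` under assignment `w`. -/
def yObs (N : ℕ) (Y1 Y0 : Fin N → ℝ) (w : Fin N → Bool) (i : Fin N) : ℝ :=
  if w i then Y1 i else Y0 i

/-- `l_i(w) = 1` if treated, `−1` if control. -/
def ell (N : ℕ) (w : Fin N → Bool) (i : Fin N) : ℝ :=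
  if w i then 1 else -1

/-- The treated set `T(w)`. -/
def Tset (N : ℕ) (w : Fin N → Bool) : Finset (Fin N) :=
  univ.filter fun i => w i = true

/-- Completely randomized design with equal group sizes. -/
def crd (N : ℕ) (w : Fin N → Bool) : ℝ :=
  if (Tset N w).card = N / 2 then (1 : ℝ) / (N.choose (N / 2)) else 0

/-- The contrast variance estimator
`V̂_sub(W) = (4/N²)·Σ_{w ∈ 𝒲 : W ∈ G(w)} (p_w/p_W)·(1/|G(w)|)·(Σ_i l_i(w)·y_i(W))²`. -/
def Vsub (N : ℕ) (p : (Fin N → Bool) → ℝ) (Y1 Y0 : Fin N → ℝ)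
    (G : (Fin N → Bool) → Finset (Fin N → Bool)) (W : Fin N → Bool) : ℝ :=
  (4 / (N : ℝ) ^ 2) * ∑ w : Fin N → Bool,
    if 0 < p w ∧ W ∈ G w then
      (p w / p W) * (1 / ((G w).card : ℝ)) * (∑ i, ell N w i * yObs N Y1 Y0 W i) ^ 2
    else 0

/-- The full set of substitutes of `w` under the CRD:
`G*(w) = {w̃ : Σ_i w̃_i = N/2, |T(w̃) ∩ T(w)| = N/4}`. -/
def Gstar (N : ℕ) (w : Fin N → Bool) : Finset (Fin N → Bool) :=
  univ.filter fun w' =>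
    (Tset N w').card = N / 2 ∧ (Tset N w' ∩ Tset N w).card = N / 4

/-- Average observed outcome among treated units. -/
def ybarT (N : ℕ) (Y1 Y0 : Fin N → ℝ) (W : Fin N → Bool) : ℝ :=
  (∑ i ∈ Tset N W, yObs N Y1 Y0 W i) / ((Tset N W).card : ℝ)

/-- Average observed outcome among control units. -/
def ybarC (N : ℕ) (Y1 Y0 : Fin N → ℝ) (W : Fin N → Bool) : ℝ :=
  (∑ i ∈ (Tset N W)ᶜ, yObs N Y1 Y0 W i) / (((Tset N W)ᶜ.card : ℝ))

/-- Neyman's variance estimator. -/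
def VNeyman (N : ℕ) (Y1 Y0 : Fin N → ℝ) (W : Fin N → Bool) : ℝ :=
  (1 / (((N : ℝ) / 2) * ((N : ℝ) / 2 - 1))) *
    ((∑ i ∈ Tset N W, (yObs N Y1 Y0 W i - ybarT N Y1 Y0 W) ^ 2)
      + ∑ i ∈ (Tset N W)ᶜ, (yObs N Y1 Y0 W i - ybarC N Y1 Y0 W) ^ 2)


lemma tset_bijective (N : ℕ) : Function.Bijective (Tset N) := by
  rw [Function.bijective_iff_has_inverse]
  refine ⟨fun S i => decide (i ∈ S), fun w => ?_, fun S => ?_⟩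
  · funext i
    by_cases h : w i = true <;> simp [Tset, h]
  · ext i
    simp [Tset]

lemma sum_tset {M : Type*} [AddCommMonoid M] (N : ℕ) (F : Finset (Fin N) → M) :
    ∑ w : Fin N → Bool, F (Tset N w) = ∑ S : Finset (Fin N), F S :=
  Fintype.sum_bijective (Tset N) (tset_bijective N) _ _ (fun _ => rfl)

lemma sum_split {M : Type*} [AddCommMonoid M] (N m : ℕ) (t : Finset (Fin N))
    (F : Finset (Fin N) → M) :
    ∑ S ∈ univ.filter (fun S : Finset (Fin N) => S.card = 2 * m ∧ (S ∩ t).card = m), F S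
      = ∑ p ∈ (t.powersetCard m) ×ˢ (tᶜ.powersetCard m), F (p.1 ∪ p.2) := by
  apply Finset.sum_nbij' (i := fun S => (S ∩ t, S \ t)) (j := fun p => p.1 ∪ p.2)
  · intro S hS
    rw [mem_filter] at hS
    obtain ⟨-, hcard, hint⟩ := hS
    rw [Finset.mem_product, mem_powersetCard, mem_powersetCard]
    refine ⟨⟨inter_subset_right, hint⟩, fun i hi => ?_, ?_⟩
    · rw [Finset.mem_compl]; exact (mem_sdiff.mp hi).2
    · have h := Finset.card_inter_add_card_sdiff S t
      simp only at *
      omega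
  · intro p hp
    rw [Finset.mem_product, mem_powersetCard, mem_powersetCard] at hp
    obtain ⟨⟨h1s, h1c⟩, h2s, h2c⟩ := hp
    have hdisj : Disjoint p.1 p.2 := by
      refine disjoint_of_subset_left h1s (disjoint_of_subset_right h2s ?_)
      exact disjoint_compl_right
    rw [mem_filter]
    refine ⟨mem_univ _, ?_, ?_⟩
    · rw [card_union_of_disjoint hdisj, h1c, h2c]; ring
    · rw [union_inter_distrib_right, inter_eq_left.mpr h1s,
        (Finset.disjoint_iff_inter_eq_empty.mp
          (disjoint_of_subset_left h2s disjoint_compl_left)), union_empty, h1c]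
  · intro S hS
    simp only
    rw [union_comm]
    exact Finset.sdiff_union_inter S t
  · intro p hp
    rw [Finset.mem_product, mem_powersetCard, mem_powersetCard] at hp
    obtain ⟨⟨h1s, h1c⟩, h2s, h2c⟩ := hp
    have h2t : Disjoint p.2 t := disjoint_of_subset_left h2s disjoint_compl_left
    have h1 : (p.1 ∪ p.2) ∩ t = p.1 := by
      rw [union_inter_distrib_right, inter_eq_left.mpr h1s,
        Finset.disjoint_iff_inter_eq_empty.mp h2t, union_empty]
    have h2 : (p.1 ∪ p.2) \ t = p.2 := by
      rw [union_sdiff_distrib, sdiff_eq_empty_iff_subset.mpr h1s,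
        sdiff_eq_self_of_disjoint h2t, empty_union]
    simp only [h1, h2]
  · intro S hS
    rw [mem_filter] at hS
    simp only
    rw [union_comm, Finset.sdiff_union_inter S t]

lemma ell_sum (N : ℕ) (w : Fin N → Bool) (y : Fin N → ℝ) :
    ∑ i, ell N w i * y i = 2 * ∑ i ∈ Tset N w, y i - ∑ i, y i := by
  have h : ∀ i, ell N w i * y i = 2 * (if w i = true then y i else 0) - y i := by
    intro i
    by_cases hw : w i = true <;> simp [ell, hw] <;> ring
  rw [Finset.sum_congr rfl fun i _ => h i, Finset.sum_sub_distrib, ← Finset.mul_sum,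
    ← Finset.sum_filter]
  rfl

lemma gstar_card (N m : ℕ) (hN : N = 4 * m) (w : Fin N → Bool)
    (hw : (Tset N w).card = 2 * m) :
    (Gstar N w).card = (2 * m).choose m * ((2 * m).choose m) := by
  have hN2 : N / 2 = 2 * m := by omega
  have hN4 : N / 4 = m := by omega
  have hcompl : (Tset N w)ᶜ.card = 2 * m := by
    have := Finset.card_compl (Tset N w)
    rw [hw] at this
    simp only [Fintype.card_fin] at this
    omega
  have h1 : (Gstar N w).card = ∑ w' : Fin N → Bool,
      (if (Tset N w').card = 2 * m ∧ (Tset N w' ∩ Tset N w).card = m then 1 else 0) := by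
    rw [Gstar, ← Finset.sum_filter]
    simp only [hN2, hN4, Finset.sum_const, smul_eq_mul, mul_one, Finset.card_filter]
  rw [h1, sum_tset N (fun S => if S.card = 2 * m ∧ (S ∩ Tset N w).card = m then 1 else 0),
    ← Finset.sum_filter,
    sum_split N m (Tset N w) (fun _ => 1), Finset.sum_const, smul_eq_mul, mul_one,
    Finset.card_product, Finset.card_powersetCard, Finset.card_powersetCard, hw, hcompl]
set_option maxHeartbeats 1000000 in
/-- Theorem 2: under the CRD with `N = 4m`, the contrast variance estimator with the
full set of substitutes equals Neyman's variance estimator. -/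
theorem contrast_equals_neyman
    (N m : ℕ) (hm : 1 ≤ m) (hN : N = 4 * m)
    (Y1 Y0 : Fin N → ℝ)
    (W : Fin N → Bool) (hW : (Tset N W).card = N / 2) :
    Vsub N (crd N) Y1 Y0 (Gstar N) W = VNeyman N Y1 Y0 W := by
  have hN2 : N / 2 = 2 * m := by omega
  have hN4 : N / 4 = m := by omega
  rw [Vsub, VNeyman]
  set y : Fin N → ℝ := yObs N Y1 Y0 W with hy
  set t : Finset (Fin N) := Tset N W with ht
  set ybt : ℝ := ybarT N Y1 Y0 W with hybt
  set ybc : ℝ := ybarC N Y1 Y0 W with hybc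
  set zT : Fin N → ℝ := fun i => y i - ybt with hzT
  set zC : Fin N → ℝ := fun i => y i - ybc with hzC
  set c : ℕ := (2 * m).choose m with hc
  set K : ℕ := (2 * m - 2).choose (m - 1) with hK
  have htcard : t.card = 2 * m := by rw [ht, hW, hN2]
  have htccard : tᶜ.card = 2 * m := by
    have h := Finset.card_compl t
    rw [htcard] at h
    simp only [Fintype.card_fin] at h
    omega
  have hm0 : (m : ℝ) ≠ 0 := by
    have : (0:ℝ) < m := by exact_mod_cast hm
    linarith
  have hcpos : 0 < c := Nat.choose_pos (by omega)
  have hcR : (0:ℝ) < (c:ℝ) := by exact_mod_cast hcpos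
  have hchoosePos : (0:ℝ) < (N.choose (N / 2) : ℝ) := by
    exact_mod_cast Nat.choose_pos (Nat.div_le_self N 2)
  have hposIff : ∀ w, 0 < crd N w ↔ (Tset N w).card = N / 2 := by
    intro w
    rw [crd]
    split_ifs with h
    · exact ⟨fun _ => h, fun _ => by positivity⟩
    · exact ⟨fun h' => absurd h' (lt_irrefl 0), fun h' => absurd h' h⟩
  have hsum_t : ∑ i ∈ t, y i = (2 * (m:ℝ)) * ybt := by
    rw [hybt, ybarT, ← ht, ← hy, htcard]
    push_cast
    field_simp
  have hsum_c : ∑ i ∈ tᶜ, y i = (2 * (m:ℝ)) * ybc := by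
    rw [hybc, ybarC, ← ht, ← hy, htccard]
    push_cast
    field_simp
  have hzT0 : ∑ i ∈ t, zT i = 0 := by
    rw [hzT]
    rw [Finset.sum_sub_distrib, Finset.sum_const, htcard, hsum_t, nsmul_eq_mul]
    push_cast
    ring
  have hzC0 : ∑ i ∈ tᶜ, zC i = 0 := by
    rw [hzC]
    rw [Finset.sum_sub_distrib, Finset.sum_const, htccard, hsum_c, nsmul_eq_mul]
    push_cast
    ring
  have ha0 : ∑ A ∈ t.powersetCard m, (∑ i ∈ A, zT i) = 0 := by
    rw [sum_powersetCard_linear t m hm zT, hzT0, mul_zero]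
  have hb0 : ∑ B ∈ tᶜ.powersetCard m, (∑ i ∈ B, zC i) = 0 := by
    rw [sum_powersetCard_linear tᶜ m hm zC, hzC0, mul_zero]
  have ha2 : ∑ A ∈ t.powersetCard m, (∑ i ∈ A, zT i) ^ 2 = (K:ℝ) * ∑ i ∈ t, zT i ^ 2 := by
    have h := sum_powersetCard_sq t m hm (by omega) zT hzT0
    rw [htcard] at h
    rw [h, hK]
  have hb2 : ∑ B ∈ tᶜ.powersetCard m, (∑ i ∈ B, zC i) ^ 2 = (K:ℝ) * ∑ i ∈ tᶜ, zC i ^ 2 := by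
    have h := sum_powersetCard_sq tᶜ m hm (by omega) zC hzC0
    rw [htccard] at h
    rw [h, hK]
  -- Step 1: reindex the sum over assignments to a sum over pairs of subsets
  have hstep1 : (∑ w : Fin N → Bool,
      if 0 < crd N w ∧ W ∈ Gstar N w then
        crd N w / crd N W * (1 / ((Gstar N w).card : ℝ)) *
          (∑ i, ell N w i * y i) ^ 2
      else 0)
      = ∑ p ∈ (t.powersetCard m) ×ˢ (tᶜ.powersetCard m),
          (1 / ((c:ℝ) * (c:ℝ))) * (2 * (∑ i ∈ p.1 ∪ p.2, y i) - ∑ i, y i) ^ 2 := by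
    calc (∑ w : Fin N → Bool,
        if 0 < crd N w ∧ W ∈ Gstar N w then
          crd N w / crd N W * (1 / ((Gstar N w).card : ℝ)) *
            (∑ i, ell N w i * y i) ^ 2
        else 0)
        = ∑ w : Fin N → Bool, (fun S : Finset (Fin N) =>
            if S.card = 2 * m ∧ (S ∩ t).card = m then
              (1 / ((c:ℝ) * (c:ℝ))) * (2 * (∑ i ∈ S, y i) - ∑ i, y i) ^ 2
            else 0) (Tset N w) := by
          refine Finset.sum_congr rfl fun w _ => ?_
          dsimp only
          by_cases hcond : (Tset N w).card = 2 * m ∧ ((Tset N w) ∩ t).card = m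
          · have h1 : 0 < crd N w := (hposIff w).mpr (by rw [hN2]; exact hcond.1)
            have h2 : W ∈ Gstar N w := by
              rw [Gstar, Finset.mem_filter]
              refine ⟨Finset.mem_univ _, hW, ?_⟩
              rw [hN4, Finset.inter_comm]
              exact hcond.2
            rw [if_pos ⟨h1, h2⟩, if_pos hcond]
            have hcw : crd N w = 1 / (N.choose (N / 2) : ℝ) := by
              rw [crd, if_pos (by rw [hN2]; exact hcond.1)]
            have hcW : crd N W = 1 / (N.choose (N / 2) : ℝ) := by
              rw [crd, if_pos (by rw [← ht]; exact hW)]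
            have hgc : (Gstar N w).card = c * c := gstar_card N m hN w hcond.1
            rw [hcw, hcW, hgc, ell_sum N w y, div_self (by positivity)]
            push_cast
            ring
          · rw [if_neg hcond, if_neg]
            rintro ⟨h1, h2⟩
            apply hcond
            have hh1 := (hposIff w).mp h1
            rw [Gstar, Finset.mem_filter] at h2
            obtain ⟨-, -, h22⟩ := h2
            rw [Finset.inter_comm] at h22
            rw [← ht] at h22
            exact ⟨by omega, by rw [← hN4]; exact h22⟩
      _ = ∑ S : Finset (Fin N),
            if S.card = 2 * m ∧ (S ∩ t).card = m then
              (1 / ((c:ℝ) * (c:ℝ))) * (2 * (∑ i ∈ S, y i) - ∑ i, y i) ^ 2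
            else 0 := by
          exact sum_tset N (fun S : Finset (Fin N) =>
            if S.card = 2 * m ∧ (S ∩ t).card = m then
              (1 / ((c:ℝ) * (c:ℝ))) * (2 * (∑ i ∈ S, y i) - ∑ i, y i) ^ 2
            else 0)
      _ = ∑ S ∈ Finset.univ.filter (fun S : Finset (Fin N) =>
            S.card = 2 * m ∧ (S ∩ t).card = m),
            (1 / ((c:ℝ) * (c:ℝ))) * (2 * (∑ i ∈ S, y i) - ∑ i, y i) ^ 2 := by
          rw [Finset.sum_filter]
      _ = _ := sum_split N m t _
  rw [hstep1]
  -- Step 2: rewrite the summand in centered form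
  have hstep2 : ∀ p ∈ (t.powersetCard m) ×ˢ (tᶜ.powersetCard m),
      (1 / ((c:ℝ) * (c:ℝ))) * (2 * (∑ i ∈ p.1 ∪ p.2, y i) - ∑ i, y i) ^ 2
      = (1 / ((c:ℝ) * (c:ℝ))) *
          (2 * (∑ i ∈ p.1, zT i) + 2 * (∑ i ∈ p.2, zC i)) ^ 2 := by
    intro p hp
    rw [Finset.mem_product, Finset.mem_powersetCard, Finset.mem_powersetCard] at hp
    obtain ⟨⟨h1s, h1c⟩, h2s, h2c⟩ := hp
    have hdisj : Disjoint p.1 p.2 :=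
      Finset.disjoint_of_subset_left h1s
        (Finset.disjoint_of_subset_right h2s disjoint_compl_right)
    have htot : ∑ i, y i = ∑ i ∈ t, y i + ∑ i ∈ tᶜ, y i :=
      (Finset.sum_add_sum_compl t y).symm
    have e1 : ∑ i ∈ p.1, zT i = ∑ i ∈ p.1, y i - m * ybt := by
      rw [hzT, Finset.sum_sub_distrib, Finset.sum_const, h1c, nsmul_eq_mul]
    have e2 : ∑ i ∈ p.2, zC i = ∑ i ∈ p.2, y i - m * ybc := by
      rw [hzC, Finset.sum_sub_distrib, Finset.sum_const, h2c, nsmul_eq_mul]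
    rw [Finset.sum_union hdisj, htot, hsum_t, hsum_c, e1, e2]
    ring
  rw [Finset.sum_congr rfl hstep2, ← Finset.mul_sum, Finset.sum_product]
  -- Step 3: evaluate the double sum
  have hinner : ∀ A ∈ t.powersetCard m,
      ∑ B ∈ tᶜ.powersetCard m,
        (2 * (∑ i ∈ A, zT i) + 2 * (∑ i ∈ B, zC i)) ^ 2
      = ((c:ℝ) * 4) * (∑ i ∈ A, zT i) ^ 2 + 4 * ((K:ℝ) * ∑ i ∈ tᶜ, zC i ^ 2) := by
    intro A _
    have expand : ∀ B ∈ tᶜ.powersetCard m,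
        (2 * (∑ i ∈ A, zT i) + 2 * (∑ i ∈ B, zC i)) ^ 2
        = 4 * (∑ i ∈ A, zT i) ^ 2 +
            ((8 * (∑ i ∈ A, zT i)) * (∑ i ∈ B, zC i) + 4 * (∑ i ∈ B, zC i) ^ 2) :=
      fun B _ => by ring
    rw [Finset.sum_congr rfl expand, Finset.sum_add_distrib, Finset.sum_add_distrib,
      Finset.sum_const, ← Finset.mul_sum, hb0, ← Finset.mul_sum, hb2,
      Finset.card_powersetCard, htccard, nsmul_eq_mul, ← hc]
    ring
  rw [Finset.sum_congr rfl hinner, Finset.sum_add_distrib, Finset.sum_const,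
    ← Finset.mul_sum, ha2, Finset.card_powersetCard, htcard, ← hc, nsmul_eq_mul]
  -- Step 4: final arithmetic
  have hIdNat : m * m * ((2 * m).choose m)
      = (2 * m) * (2 * m - 1) * ((2 * m - 2).choose (m - 1)) := by
    obtain ⟨m', rfl⟩ : ∃ m', m = m' + 1 := ⟨m - 1, by omega⟩
    have h1 := Nat.add_one_mul_choose_eq (2 * m' + 1) m'
    have h2 := Nat.add_one_mul_choose_eq (2 * m') m'
    have h3 : (2 * m' + 1).choose (m' + 1) = (2 * m' + 1).choose m' := by
      have := Nat.choose_symm (by omega : m' + 1 ≤ 2 * m' + 1)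
      simpa [show 2 * m' + 1 - (m' + 1) = m' by omega] using this.symm
    have e1 : 2 * (m' + 1) - 1 = 2 * m' + 1 := by omega
    have e2 : 2 * (m' + 1) - 2 = 2 * m' := by omega
    have e3 : m' + 1 - 1 = m' := by omega
    rw [e1, e2, e3, show 2 * (m' + 1) = (2 * m' + 1) + 1 by ring]
    calc (m' + 1) * (m' + 1) * ((2 * m' + 1 + 1).choose (m' + 1))
        = (m' + 1) * ((2 * m' + 1 + 1).choose (m' + 1) * (m' + 1)) := by ring
      _ = (m' + 1) * ((2 * m' + 1 + 1) * (2 * m' + 1).choose m') := by rw [← h1]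
      _ = (2 * m' + 1 + 1) * ((2 * m' + 1).choose (m' + 1) * (m' + 1)) := by
          rw [← h3]; ring
      _ = (2 * m' + 1 + 1) * ((2 * m' + 1) * (2 * m').choose m') := by rw [← h2]
      _ = (2 * m' + 1 + 1) * (2 * m' + 1) * (2 * m').choose m' := by ring
  have hIdR : (m:ℝ) * m * (c:ℝ) = (2 * m) * (2 * (m:ℝ) - 1) * (K:ℝ) := by
    have hcast : ((m * m * ((2 * m).choose m) : ℕ) : ℝ)
        = (((2 * m) * (2 * m - 1) * ((2 * m - 2).choose (m - 1)) : ℕ) : ℝ) := by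
      exact_mod_cast congrArg (fun n : ℕ => (n : ℝ)) hIdNat
    push_cast at hcast
    rw [Nat.cast_sub (by omega : 1 ≤ 2 * m)] at hcast
    push_cast at hcast
    rw [hc, hK]
    convert hcast using 2
  have hNR : (N : ℝ) = 4 * m := by exact_mod_cast congrArg (fun n : ℕ => (n : ℝ)) hN
  rw [hNR]
  have h2m1 : (2 * (m:ℝ) - 1) ≠ 0 := by
    have : (1:ℝ) ≤ m := by exact_mod_cast hm
    linarith
  have hfold1 : ∑ i ∈ t, (y i - ybt) ^ 2 = ∑ i ∈ t, zT i ^ 2 := by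
    refine Finset.sum_congr rfl fun i _ => ?_
    rw [hzT]
  have hfold2 : ∑ i ∈ tᶜ, (y i - ybc) ^ 2 = ∑ i ∈ tᶜ, zC i ^ 2 := by
    refine Finset.sum_congr rfl fun i _ => ?_
    rw [hzC]
  rw [hfold1, hfold2]
  have e2m : (4 * (m:ℝ)) / 2 = 2 * m := by ring
  rw [e2m]
  have h2m0 : (2:ℝ) * m ≠ 0 := by
    intro h; apply hm0; linarith [h]
  have hden : (2 * (m:ℝ)) * (2 * m - 1) ≠ 0 := mul_ne_zero (by exact h2m0) h2m1
  have hc0 : (c:ℝ) ≠ 0 := ne_of_gt hcR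
  field_simp
  rw [eq_div_iff (by contrapose! h2m1; linarith)]
  have h' : (m:ℝ) * c = 2 * (2 * m - 1) * K := mul_left_cancel₀ hm0 (by linear_combination hIdR)
  linear_combination (-(∑ i ∈ t, zT i ^ 2 + ∑ i ∈ tᶜ, zC i ^ 2)) * h'
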